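/- Let G be a finite group, H ≤ G a subgroup, p a prime, and X a finite G-set. Then the number of points of X fixed by every element of H is congruent modulo p to the number of points of X fixed by every element of O^p(H), i.e. |X^H| ≡ |X^{O^p(H)}| (mod p). -/

import Mathlib

section aux
variable {G : Type*} [Group G] {H : Subgroup G} (K : Subgroup ↥H) [hK : K.Normal]
  {X : Type*} [MulAction G X]

instance hAction : MulAction ↥H {x : X // ∀ g ∈ K.map H.subtype, g • x = x} where
  smul h y := ⟨(h : G) • y.1, fun g hg => by
    obtain ⟨k, hk, rfl⟩ := hg
    have h1 : ((h⁻¹ * k * h : ↥H) : G) ∈ K.map H.subtype :=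
      ⟨h⁻¹ * k * h, by simpa using hK.conj_mem k hk h⁻¹, rfl⟩
    have h2 := y.2 _ h1
    have h3 : ((h⁻¹ * k * h : ↥H) : G) = (h : G)⁻¹ * k * h := by push_cast; ring
    rw [h3] at h2
    show (H.subtype k) • ((h : G) • (y : X)) = (h : G) • (y : X)
    rw [Subgroup.coe_subtype, smul_smul,
      show (k : G) * h = (h : G) * ((h : G)⁻¹ * k * h) by group, ← smul_smul, h2]⟩
  one_smul y := Subtype.ext (by simp [HSMul.hSMul]; exact one_smul G y.1)
  mul_smul a b y := Subtype.ext (by simp [HSMul.hSMul]; exact mul_smul (a : G) b y.1)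

@[simp] theorem hAction_smul_coe (h : ↥H) (y : {x : X // ∀ g ∈ K.map H.subtype, g • x = x}) :
    ((h • y : {x : X // ∀ g ∈ K.map H.subtype, g • x = x}) : X) = (h : G) • (y : X) := rfl

def qPerm : ↥H ⧸ K →* Equiv.Perm {x : X // ∀ g ∈ K.map H.subtype, g • x = x} :=
  QuotientGroup.lift K (MulAction.toPermHom ↥H _) <| by
    intro k hk
    ext y
    simpa using y.2 (k : G) ⟨k, hk, rfl⟩

instance qAction : MulAction (↥H ⧸ K) {x : X // ∀ g ∈ K.map H.subtype, g • x = x} where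
  smul q y := qPerm K q y
  one_smul y := by show qPerm K 1 y = y; rw [map_one]; rfl
  mul_smul a b y := by show qPerm K (a * b) y = qPerm K a (qPerm K b y); rw [map_mul]; rfl

theorem qAction_mk_smul (h : ↥H) (y : {x : X // ∀ g ∈ K.map H.subtype, g • x = x}) :
    (QuotientGroup.mk h : ↥H ⧸ K) • y = h • y := rfl

end aux

def pResidual (p : ℕ) (G : Type*) [Group G] : Subgroup G :=
  ⨅ N ∈ {N : Subgroup G | N.Normal ∧ ∃ k : ℕ, N.index = p ^ k}, N

theorem mem_pResidual {p : ℕ} {G : Type*} [Group G] {g : G} :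
    g ∈ pResidual p G ↔ ∀ N : Subgroup G, N.Normal → (∃ k, N.index = p ^ k) → g ∈ N := by
  simp [pResidual, Subgroup.mem_iInf]

instance pResidual_normal (p : ℕ) (G : Type*) [Group G] : (pResidual p G).Normal := by
  constructor
  intro g hg h
  rw [mem_pResidual] at hg ⊢
  intro N hN hk
  exact hN.conj_mem g (hg N hN hk) h

theorem isPGroup_quotient_pResidual (p : ℕ) (hp : p.Prime) (G : Type*) [Group G] [Finite G] :
    IsPGroup p (G ⧸ pResidual p G) := by
  intro g
  obtain ⟨h, rfl⟩ := QuotientGroup.mk_surjective g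
  refine ⟨Nat.card G, ?_⟩
  rw [← QuotientGroup.mk_pow, QuotientGroup.eq_one_iff, mem_pResidual]
  rintro N hN ⟨k, hk⟩
  have hk' : k ≤ Nat.card G := by
    have h1 : p ^ k ≤ Nat.card G := by rw [← hk]; exact Nat.le_of_dvd Nat.card_pos N.index_dvd_card
    exact le_trans (Nat.lt_pow_self (n := k) hp.one_lt).le h1
  have := N.pow_index_mem h
  rw [hk] at this
  have he : h ^ p ^ Nat.card G = (h ^ p ^ k) ^ p ^ (Nat.card G - k) := by
    rw [← pow_mul, ← pow_add, Nat.add_sub_cancel' hk']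
  rw [he]
  exact N.pow_mem this _

theorem card_fixedPoints_modEq_pResidual (G : Type*) [Group G] [Fintype G]
    (H : Subgroup G) (p : ℕ) (hp : p.Prime)
    (X : Type*) [Fintype X] [MulAction G X] :
    Nat.card {x : X // ∀ g ∈ H, g • x = x}
      ≡ Nat.card {x : X // ∀ g ∈ (pResidual p ↥H).map H.subtype, g • x = x} [MOD p] := by
  set K := pResidual p ↥H with hKdef
  set Y := {x : X // ∀ g ∈ K.map H.subtype, g • x = x} with hY
  haveI : Fact p.Prime := ⟨hp⟩
  have hPG : IsPGroup p (↥H ⧸ K) := isPGroup_quotient_pResidual p hp ↥H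
  have key : Nat.card Y ≡ Nat.card (MulAction.fixedPoints (↥H ⧸ K) Y) [MOD p] :=
    hPG.card_modEq_card_fixedPoints Y
  have e : MulAction.fixedPoints (↥H ⧸ K) Y ≃ {x : X // ∀ g ∈ H, g • x = x} := by
    refine ⟨fun y => ⟨y.1.1, fun g hg => ?_⟩, fun x => ⟨⟨x.1, fun g hg => ?_⟩, fun q => ?_⟩,
      fun y => ?_, fun x => ?_⟩
    · have := y.2 (QuotientGroup.mk ⟨g, hg⟩)
      rw [qAction_mk_smul] at this
      exact congrArg Subtype.val this
    · obtain ⟨k, _, rfl⟩ := hg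
      exact x.2 _ k.2
    · obtain ⟨h, rfl⟩ := QuotientGroup.mk_surjective q
      rw [qAction_mk_smul]
      exact Subtype.ext (x.2 _ h.2)
    · exact Subtype.ext (Subtype.ext rfl)
    · exact Subtype.ext rfl
  rw [Nat.card_congr e] at key
  exact key.symm
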